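/- Let G be a graph and k ≥ 1. If r* is a k-restraint on G maximizing π_r(G,x) for all sufficiently large x over all k-restraints r, then r* is a proper restraint, i.e. r*(u) ∩ r*(v) = ∅ for every edge uv of G. -/

import Mathlib

/-- The number of proper `x`-colourings of `G` (colours `1,…,x`) permitted by the restraint `r`,
i.e. proper colourings `c` with `c v ∉ r v` for all `v`. -/
noncomputable def rcount {V : Type} [Fintype V] (G : SimpleGraph V) (r : V → Finset ℕ)
    (x : ℕ) : ℕ := by
  classical
  exact ((Fintype.piFinset fun _ : V => Finset.Icc 1 x).filter
    (fun c => (∀ v w, G.Adj v w → c v ≠ c w) ∧ ∀ v, c v ∉ r v)).card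

theorem stmt9 {V : Type} [Fintype V] (G : SimpleGraph V) (k : ℕ) (hk : 1 ≤ k)
    (rstar : V → Finset ℕ)
    (hrstar : ∀ v : V, (rstar v).card = k ∧ rstar v ⊆ Finset.Icc 1 (k * Fintype.card V))
    (hmax : ∃ N : ℕ, ∀ x ≥ N, ∀ r : V → Finset ℕ,
      (∀ v : V, (r v).card = k ∧ r v ⊆ Finset.Icc 1 (k * Fintype.card V)) →
      rcount G r x ≤ rcount G rstar x) :
    ∀ u v : V, G.Adj u v → Disjoint (rstar u) (rstar v) := by
  classical
  obtain ⟨N, hmax⟩ := hmax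
  intro u v huv
  by_contra hnd
  rw [Finset.disjoint_left] at hnd
  push_neg at hnd
  obtain ⟨a, hau, hav⟩ := hnd
  have huvne : u ≠ v := G.ne_of_adj huv
  have hn2 : 2 ≤ Fintype.card V := Fintype.one_lt_card_iff_nontrivial.2 ⟨u, v, huvne⟩
  set n := Fintype.card V with hn
  set K := k * n with hK
  -- an unused colour b
  have hbex : ∃ b, b ∈ Finset.Icc 1 K ∧ ∀ w, b ∉ rstar w := by
    by_contra hc
    push_neg at hc
    have hsub : Finset.Icc 1 K ⊆ (Finset.univ.erase v).biUnion rstar ∪ (rstar v).erase a := by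
      intro t ht
      obtain ⟨w, hw⟩ := hc t ht
      by_cases hwv : w = v
      · subst hwv
        by_cases hta : t = a
        · exact Finset.mem_union_left _ (Finset.mem_biUnion.2
            ⟨u, Finset.mem_erase.2 ⟨huvne, Finset.mem_univ u⟩, hta ▸ hau⟩)
        · exact Finset.mem_union_right _ (Finset.mem_erase.2 ⟨hta, hw⟩)
      · exact Finset.mem_union_left _ (Finset.mem_biUnion.2
          ⟨w, Finset.mem_erase.2 ⟨hwv, Finset.mem_univ w⟩, hw⟩)
    have h1 : ((Finset.univ.erase v).biUnion rstar).card ≤ (n - 1) * k := by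
      refine le_trans Finset.card_biUnion_le ?_
      rw [Finset.sum_congr rfl (fun w _ => (hrstar w).1), Finset.sum_const, smul_eq_mul,
        Finset.card_erase_of_mem (Finset.mem_univ v), Finset.card_univ]
    have h2 : ((rstar v).erase a).card = k - 1 := by
      rw [Finset.card_erase_of_mem hav, (hrstar v).1]
    have h3 := Finset.card_le_card hsub
    have h4 := Finset.card_union_le ((Finset.univ.erase v).biUnion rstar) ((rstar v).erase a)
    have h5 : (Finset.Icc 1 K).card = K := by rw [Nat.card_Icc]; omega
    have h6 : (n - 1) * k = n * k - k := by rw [Nat.sub_one_mul]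
    have h7 : k ≤ n * k := Nat.le_mul_of_pos_left k (by omega)
    have h8 : K = k * n := hK
    have h9 : k * n = n * k := Nat.mul_comm k n
    omega
  obtain ⟨b, hbK, hb⟩ := hbex
  have hab : a ≠ b := fun h => hb u (h ▸ hau)
  have haK : a ∈ Finset.Icc 1 K := (hrstar u).2 hau
  -- the modified restraint
  set r' : V → Finset ℕ := Function.update rstar u (insert b ((rstar u).erase a)) with hr'
  have hr'valid : ∀ w : V, (r' w).card = k ∧ r' w ⊆ Finset.Icc 1 K := by
    intro w
    by_cases hwu : w = u
    · subst hwu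
      rw [hr', Function.update_self]
      constructor
      · rw [Finset.card_insert_of_notMem (fun h => hb w (Finset.mem_of_mem_erase h)),
          Finset.card_erase_of_mem hau, (hrstar w).1]
        omega
      · exact Finset.insert_subset hbK
          (Finset.Subset.trans (Finset.erase_subset a (rstar w)) (hrstar w).2)
    · rw [hr', Function.update_of_ne hwu]
      exact hrstar w
  -- choice of x
  set m : ℕ := n ^ 2 * (n * (k + 1)) ^ n + N + 1 with hm
  set x : ℕ := n * m + K with hx
  have hm1 : 1 ≤ m := Nat.le_add_left 1 _
  have hNm : N ≤ m := (Nat.le_add_left N _).trans (Nat.le_succ _)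
  have hmx : m ≤ x := le_trans (Nat.le_mul_of_pos_left m (by omega)) (Nat.le_add_right _ _)
  have hxN : N ≤ x := hNm.trans hmx
  have hKx : K ≤ x := by omega
  -- the sets of colourings
  set P : Finset (V → ℕ) := Fintype.piFinset fun _ : V => Finset.Icc 1 x with hP
  set Qp : (V → ℕ) → Prop :=
    fun c => (∀ y z, G.Adj y z → c y ≠ c z) ∧ ∀ w, w ≠ u → c w ∉ rstar w with hQp
  set Sa : Finset (V → ℕ) := P.filter (fun c => Qp c ∧ c u = a) with hSa
  set Sb : Finset (V → ℕ) := P.filter (fun c => Qp c ∧ c u = b) with hSb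
  set X : Finset (V → ℕ) := P.filter (fun c => Qp c ∧ c u ∉ rstar u) with hX
  have hrc : ∀ s : V → Finset ℕ, rcount G s x =
      (P.filter (fun c => (∀ y z, G.Adj y z → c y ≠ c z) ∧ ∀ w, c w ∉ s w)).card := by
    intro s
    unfold rcount
    congr!
  have hXstar : rcount G rstar x = X.card := by
    rw [hrc rstar, hX]
    congr 1
    apply Finset.filter_congr
    intro c _
    constructor
    · rintro ⟨h1, h2⟩
      exact ⟨⟨h1, fun w _ => h2 w⟩, h2 u⟩
    · rintro ⟨⟨h1, h2⟩, h3⟩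
      refine ⟨h1, fun w => ?_⟩
      by_cases hwu : w = u
      · subst hwu; exact h3
      · exact h2 w hwu
  have hSbX : Sb ⊆ X := by
    intro c hc
    simp only [hSb, hX, Finset.mem_filter] at hc ⊢
    exact ⟨hc.1, hc.2.1, fun hmem => hb u (hc.2.2 ▸ hmem)⟩
  have hdisj : Disjoint X Sa := by
    rw [Finset.disjoint_left]
    intro c hc hc'
    simp only [hX, hSa, Finset.mem_filter] at hc hc'
    exact hc.2.2 (hc'.2.2 ▸ hau)
  have hmemr' : ∀ c : V → ℕ, (c u ∉ r' u) ↔ (c u ≠ b ∧ (c u ∉ rstar u ∨ c u = a)) := by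
    intro c
    rw [hr', Function.update_self]
    simp only [Finset.mem_insert, Finset.mem_erase]
    tauto
  have hX' : rcount G r' x = (X.card + Sa.card) - Sb.card := by
    have hset : P.filter (fun c => (∀ y z, G.Adj y z → c y ≠ c z) ∧ ∀ w, c w ∉ r' w)
        = (X ∪ Sa) \ Sb := by
      ext c
      simp only [Finset.mem_filter, Finset.mem_sdiff, Finset.mem_union, hX, hSa, hSb]
      constructor
      · rintro ⟨hcP, h1, h2⟩
        have hQ : Qp c := ⟨h1, fun w hw => by
          have := h2 w; rwa [hr', Function.update_of_ne hw] at this⟩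
        have hu := (hmemr' c).1 (h2 u)
        refine ⟨?_, fun hc => hu.1 hc.2.2⟩
        rcases hu.2 with h | h
        · exact Or.inl ⟨hcP, hQ, h⟩
        · exact Or.inr ⟨hcP, hQ, h⟩
      · rintro ⟨hor, hnb⟩
        have hcP : c ∈ P := by rcases hor with h | h <;> exact h.1
        have hQ : Qp c := by rcases hor with h | h <;> exact h.2.1
        refine ⟨hcP, hQ.1, fun w => ?_⟩
        by_cases hwu : w = u
        · subst hwu
          refine (hmemr' c).2 ⟨fun hcb => hnb ⟨hcP, hQ, hcb⟩, ?_⟩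
          rcases hor with h | h
          · exact Or.inl h.2.2
          · exact Or.inr h.2.2
        · rw [hr', Function.update_of_ne hwu]
          exact hQ.2 w hwu
    have hSbsub : Sb ⊆ X ∪ Sa := Finset.Subset.trans hSbX (Finset.subset_union_left)
    rw [hrc r', hset, Finset.card_sdiff_of_subset hSbsub, Finset.card_union_of_disjoint hdisj]
  -- main inequality
  have hmain : Sb.card < Sa.card := by
    set good : (V → ℕ) → Prop := fun c => ∀ w, w ≠ u → c w = b → a ∉ rstar w with hgood
    have key : ∀ c ∈ P, Qp c → good c →
        ((Equiv.swap a b) ∘ c ∈ P ∧ Qp ((Equiv.swap a b) ∘ c) ∧ good ((Equiv.swap a b) ∘ c)) := by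
      intro c hcP hQ hg
      have hmemx : ∀ t, t ∈ Finset.Icc 1 x → (Equiv.swap a b) t ∈ Finset.Icc 1 x := by
        intro t ht
        rcases eq_or_ne t a with rfl | hta
        · rw [Equiv.swap_apply_left]; exact Finset.Icc_subset_Icc le_rfl hKx hbK
        rcases eq_or_ne t b with rfl | htb
        · rw [Equiv.swap_apply_right]; exact Finset.Icc_subset_Icc le_rfl hKx haK
        · rwa [Equiv.swap_apply_of_ne_of_ne hta htb]
      refine ⟨?_, ⟨?_, ?_⟩, ?_⟩
      · rw [Fintype.mem_piFinset] at hcP ⊢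
        exact fun y => hmemx _ (hcP y)
      · intro y z hyz hEq
        exact hQ.1 y z hyz ((Equiv.swap a b).injective hEq)
      · intro w hw
        rcases eq_or_ne (c w) a with hca | hca
        · rw [Function.comp_apply, hca, Equiv.swap_apply_left]
          exact hb w
        rcases eq_or_ne (c w) b with hcb | hcb
        · rw [Function.comp_apply, hcb, Equiv.swap_apply_right]
          exact hg w hw hcb
        · rw [Function.comp_apply, Equiv.swap_apply_of_ne_of_ne hca hcb]
          exact hQ.2 w hw
      · intro w hw hwb
        have hca : c w = a := by
          have := congrArg (Equiv.swap a b) hwb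
          rwa [Function.comp_apply, Equiv.swap_apply_self, Equiv.swap_apply_right] at this
        rw [← hca]
        exact hQ.2 w hw
    have hswap : (Sa.filter good).card = (Sb.filter good).card := by
      refine Finset.card_bij' (fun c _ => (Equiv.swap a b) ∘ c) (fun c _ => (Equiv.swap a b) ∘ c)
        ?_ ?_ ?_ ?_
      · intro c hc
        simp only [Finset.mem_filter, hSa, hSb] at hc ⊢
        obtain ⟨⟨hcP, hQ, hca⟩, hg⟩ := hc
        obtain ⟨h1, h2, h3⟩ := key c hcP hQ hg
        exact ⟨⟨h1, h2, by rw [Function.comp_apply, hca, Equiv.swap_apply_left]⟩, h3⟩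
      · intro c hc
        simp only [Finset.mem_filter, hSa, hSb] at hc ⊢
        obtain ⟨⟨hcP, hQ, hcb⟩, hg⟩ := hc
        obtain ⟨h1, h2, h3⟩ := key c hcP hQ hg
        exact ⟨⟨h1, h2, by rw [Function.comp_apply, hcb, Equiv.swap_apply_right]⟩, h3⟩
      · intro c _
        funext y
        simp [Equiv.swap_apply_self]
      · intro c _
        funext y
        simp [Equiv.swap_apply_self]
    have hSasplit := Finset.card_filter_add_card_filter_not (s := Sa) good
    have hSbsplit := Finset.card_filter_add_card_filter_not (s := Sb) good
    have hbad : (Sb.filter fun c => ¬ good c).card < (Sa.filter fun c => ¬ good c).card := by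
      set nbr : (V → ℕ) → Prop := fun c => ∃ z, G.Adj u z ∧ c z = a with hnbr
      set SaB := Sa.filter (fun c => ¬ good c) with hSaB
      set SbB := Sb.filter (fun c => ¬ good c) with hSbB
      set T1 := SbB.filter (fun c => ¬ nbr c) with hT1
      set T2 := SbB.filter nbr with hT2
      have hTsplit : T2.card + T1.card = SbB.card :=
        Finset.card_filter_add_card_filter_not (s := SbB) nbr
      set F1 := SaB.filter (fun c => c v = b) with hF1
      set F2 := SaB.filter (fun c => ¬ (c v = b)) with hF2
      have hT1le : T1.card ≤ F2.card := by
        rw [hF2]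
        apply Finset.card_le_card_of_injOn (fun c => Function.update c u a)
        · intro c hc
          simp only [Finset.mem_coe, hT1, hSbB, hSb, Finset.mem_filter] at hc
          obtain ⟨⟨⟨hcP, hQ, hcb⟩, hng⟩, hnn⟩ := hc
          have hupd : ∀ y, y ≠ u → Function.update c u a y = c y :=
            fun y hy => Function.update_of_ne hy _ _
          simp only [Finset.mem_coe, hSaB, hSa, Finset.mem_filter]
          refine ⟨⟨⟨?_, ⟨?_, ?_⟩, by rw [Function.update_self]⟩, ?_⟩, ?_⟩
          · rw [Fintype.mem_piFinset] at hcP ⊢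
            intro y
            by_cases hy : y = u
            · subst hy
              rw [Function.update_self]
              exact Finset.Icc_subset_Icc le_rfl hKx haK
            · rw [hupd y hy]
              exact hcP y
          · intro y z hyz hEq
            by_cases hy : y = u
            · by_cases hz : z = u
              · exact G.ne_of_adj hyz (hy.trans hz.symm)
              · rw [hy, Function.update_self, hupd z hz] at hEq
                rw [hy] at hyz
                exact hnn ⟨z, hyz, hEq.symm⟩
            · by_cases hz : z = u
              · rw [hupd y hy, hz, Function.update_self] at hEq
                rw [hz] at hyz
                exact hnn ⟨y, hyz.symm, hEq⟩
              · rw [hupd y hy, hupd z hz] at hEq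
                exact hQ.1 y z hyz hEq
          · intro w hw
            rw [hupd w hw]
            exact hQ.2 w hw
          · intro hg
            exact hng (fun w hw hwb => hg w hw (by rw [hupd w hw]; exact hwb))
          · rw [hupd v (Ne.symm huvne)]
            intro hvb
            exact hQ.1 u v huv (by rw [hcb, hvb])
        · intro c hc c' hc' hEq
          simp only [Finset.mem_coe, hT1, hSbB, hSb, Finset.mem_filter] at hc hc'
          funext y
          by_cases hy : y = u
          · subst hy
            rw [hc.1.1.2.2, hc'.1.1.2.2]
          · have h2 := congrFun hEq y
            simp only [Function.update_of_ne hy] at h2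
            exact h2
      set Lset := P.filter (fun c => Qp c ∧ c u = a ∧ c v = b) with hLset
      have hLsub : Lset ⊆ F1 := by
        rw [hF1]
        intro c hc
        simp only [hLset, hSaB, hSa, Finset.mem_filter] at hc ⊢
        obtain ⟨hcP, hQ, hca, hcvb⟩ := hc
        exact ⟨⟨⟨hcP, hQ, hca⟩, fun hg => hg v (Ne.symm huvne) hcvb hav⟩, hcvb⟩
      have hLlb : m ^ (n - 2) ≤ Lset.card := by
        have e := Fintype.equivFin V
        set g : V → Finset ℕ := fun y =>
          if y = u then {a} else if y = v then {b}
          else Finset.Ioc (K + (e y : ℕ) * m) (K + ((e y : ℕ) + 1) * m) with hg2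
        have haKle : a ≤ K := (Finset.mem_Icc.1 haK).2
        have hbKle : b ≤ K := (Finset.mem_Icc.1 hbK).2
        have haK1 : 1 ≤ a := (Finset.mem_Icc.1 haK).1
        have hbK1 : 1 ≤ b := (Finset.mem_Icc.1 hbK).1
        have hsub : Fintype.piFinset g ⊆ Lset := by
          intro c hc
          rw [Fintype.mem_piFinset] at hc
          have hcu : c u = a := by
            have h0 := hc u
            rw [hg2] at h0
            simp at h0
            exact h0
          have hcv : c v = b := by
            have h0 := hc v
            rw [hg2] at h0
            simp [Ne.symm huvne] at h0
            exact h0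
          have hother : ∀ y, y ≠ u → y ≠ v →
              K + (e y : ℕ) * m < c y ∧ c y ≤ K + ((e y : ℕ) + 1) * m := by
            intro y h1 h2
            have h0 := hc y
            rw [hg2] at h0
            simp only [if_neg h1, if_neg h2, Finset.mem_Ioc] at h0
            exact h0
          have hotherx : ∀ y, y ≠ u → y ≠ v → K < c y ∧ c y ≤ x := by
            intro y h1 h2
            obtain ⟨hl, hr⟩ := hother y h1 h2
            refine ⟨lt_of_le_of_lt (Nat.le_add_right K _) hl, hr.trans ?_⟩
            have hle : ((e y : ℕ) + 1) ≤ n := (e y).2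
            calc K + ((e y : ℕ) + 1) * m ≤ K + n * m :=
              Nat.add_le_add_left (Nat.mul_le_mul_right m hle) K
              _ = x := by rw [hx]; omega
          have hpair : ∀ y z : V, y ≠ z → c y ≠ c z := by
            intro y z hyzne
            by_cases h1 : y = u
            · rw [h1, hcu]
              rw [h1] at hyzne
              by_cases h2 : z = v
              · rw [h2, hcv]; exact hab
              · have := (hotherx z (Ne.symm hyzne) h2).1; omega
            by_cases h1' : y = v
            · rw [h1', hcv]
              rw [h1'] at hyzne
              by_cases h2 : z = u
              · rw [h2, hcu]; exact fun h => hab h.symm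
              · have := (hotherx z h2 (Ne.symm hyzne)).1; omega
            by_cases h2 : z = u
            · rw [h2, hcu]
              have := (hotherx y h1 h1').1; omega
            by_cases h2' : z = v
            · rw [h2', hcv]
              have := (hotherx y h1 h1').1; omega
            · have hy := hother y h1 h1'
              have hz := hother z h2 h2'
              have hij : (e y : ℕ) ≠ (e z : ℕ) := by
                intro hEq
                exact hyzne (e.injective (Fin.ext hEq))
              rcases Nat.lt_or_ge (e y : ℕ) (e z : ℕ) with hlt | hge
              · have hmm : ((e y : ℕ) + 1) * m ≤ (e z : ℕ) * m :=
                  Nat.mul_le_mul_right m (by omega)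
                omega
              · have hlt : (e z : ℕ) < (e y : ℕ) := by omega
                have hmm : ((e z : ℕ) + 1) * m ≤ (e y : ℕ) * m :=
                  Nat.mul_le_mul_right m (by omega)
                omega
          simp only [hLset, Finset.mem_filter]
          refine ⟨?_, ⟨?_, ?_⟩, hcu, hcv⟩
          · rw [Fintype.mem_piFinset]
            intro y
            by_cases h1 : y = u
            · rw [h1, hcu, Finset.mem_Icc]; omega
            by_cases h2 : y = v
            · rw [h2, hcv, Finset.mem_Icc]; omega
            · obtain ⟨hl, hr⟩ := hotherx y h1 h2
              rw [Finset.mem_Icc]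
              have hK1 : 1 ≤ K := by
                rw [hK]
                exact Nat.one_le_iff_ne_zero.2 (Nat.mul_ne_zero (by omega) (by omega))
              omega
          · exact fun y z hyz => hpair y z (G.ne_of_adj hyz)
          · intro w hw
            by_cases h2 : w = v
            · rw [h2, hcv]; exact hb v
            · intro hmem
              have h3 := (Finset.mem_Icc.1 ((hrstar w).2 hmem)).2
              have := (hotherx w hw h2).1
              omega
        have hcardg : (Fintype.piFinset g).card = m ^ (n - 2) := by
          rw [Fintype.card_piFinset,
            ← Finset.mul_prod_erase Finset.univ _ (Finset.mem_univ u),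
            ← Finset.mul_prod_erase (Finset.univ.erase u) _
              (Finset.mem_erase.2 ⟨Ne.symm huvne, Finset.mem_univ v⟩)]
          have h1 : (g u).card = 1 := by
            rw [hg2]; simp
          have h2 : (g v).card = 1 := by
            rw [hg2]; simp [Ne.symm huvne]
          have h3 : ∀ y ∈ (Finset.univ.erase u).erase v, (g y).card = m := by
            intro y hy
            rw [Finset.mem_erase, Finset.mem_erase] at hy
            rw [hg2]
            simp only [if_neg hy.2.1, if_neg hy.1]
            rw [Nat.card_Ioc]
            have hEq : ((e y : ℕ) + 1) * m = (e y : ℕ) * m + m := by ring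
            rw [hEq, ← Nat.add_assoc, Nat.add_sub_cancel_left]
          rw [h1, h2, Finset.prod_congr rfl h3, Finset.prod_const]
          have hcard2 : ((Finset.univ.erase u).erase v).card = n - 2 := by
            rw [Finset.card_erase_of_mem
                (Finset.mem_erase.2 ⟨Ne.symm huvne, Finset.mem_univ v⟩),
              Finset.card_erase_of_mem (Finset.mem_univ u), Finset.card_univ,
              Nat.sub_sub, ← hn]
          rw [hcard2, one_mul, one_mul]
        calc m ^ (n - 2) = (Fintype.piFinset g).card := hcardg.symm
          _ ≤ Lset.card := Finset.card_le_card hsub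
      have hT2ub : T2.card < m ^ (n - 2) := by
        set pairs := (Finset.univ ×ˢ Finset.univ : Finset (V × V)).filter
          (fun p => p.1 ≠ u ∧ p.2 ≠ u ∧ p.1 ≠ p.2) with hpairs
        have hsubT2 : T2 ⊆ pairs.biUnion (fun p => P.filter
            (fun c => c u = b ∧ c p.1 = a ∧ c p.2 = b)) := by
          intro c hc
          simp only [hT2, hSbB, hSb, Finset.mem_filter] at hc
          obtain ⟨⟨⟨hcP, hQ, hcb⟩, hng⟩, z, hz, hza⟩ := hc
          have hng' : ∃ w, w ≠ u ∧ c w = b ∧ a ∈ rstar w := by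
            by_contra hcon
            push_neg at hcon
            exact hng (fun w hw hwb => hcon w hw hwb)
          obtain ⟨w, hw, hwb, haw⟩ := hng'
          refine Finset.mem_biUnion.2 ⟨(z, w), ?_, ?_⟩
          · simp only [hpairs, Finset.mem_filter, Finset.mem_product]
            exact ⟨⟨Finset.mem_univ _, Finset.mem_univ _⟩, Ne.symm (G.ne_of_adj hz), hw,
              fun h => hab (by rw [← hza, h, hwb])⟩
          · exact Finset.mem_filter.2 ⟨hcP, hcb, hza, hwb⟩
        have hmpos : 0 < m ^ (n - 2) := pow_pos (by omega) _
        by_cases hnp : pairs = ∅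
        · rw [hnp, Finset.biUnion_empty, Finset.subset_empty] at hsubT2
          rw [hsubT2, Finset.card_empty]
          exact hmpos
        · have hpairsne := Finset.nonempty_iff_ne_empty.2 hnp
          have hn3 : 3 ≤ n := by
            obtain ⟨p, hp⟩ := hpairsne
            simp only [hpairs, Finset.mem_filter, Finset.mem_product] at hp
            obtain ⟨-, h1, h2, h3⟩ := hp
            have hcard3 : ({u, p.1, p.2} : Finset V).card = 3 := by
              rw [Finset.card_insert_of_notMem (by simp [Ne.symm h1, Ne.symm h2]),
                Finset.card_insert_of_notMem (by simp [h3]), Finset.card_singleton]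
            calc 3 = ({u, p.1, p.2} : Finset V).card := hcard3.symm
              _ ≤ n := by rw [hn]; exact Finset.card_le_univ _
          have hF : ∀ p ∈ pairs,
              (P.filter (fun c => c u = b ∧ c p.1 = a ∧ c p.2 = b)).card ≤ x ^ (n - 3) := by
            intro p hp
            simp only [hpairs, Finset.mem_filter, Finset.mem_product] at hp
            obtain ⟨-, h1, h2, h3⟩ := hp
            set h : V → Finset ℕ := fun y =>
              if y = u then {b} else if y = p.1 then {a}
              else if y = p.2 then {b} else Finset.Icc 1 x with hh
            have hsubF : P.filter (fun c => c u = b ∧ c p.1 = a ∧ c p.2 = b)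
                ⊆ Fintype.piFinset h := by
              intro c hc
              rw [Finset.mem_filter] at hc
              obtain ⟨hcP, hc1, hc2, hc3⟩ := hc
              rw [Fintype.mem_piFinset] at hcP ⊢
              intro y
              rw [hh]
              dsimp only
              split_ifs with e1 e2 e3
              · rw [e1]; simp [hc1]
              · rw [e2]; simp [hc2]
              · rw [e3]; simp [hc3]
              · exact hcP y
            refine (Finset.card_le_card hsubF).trans ?_
            rw [Fintype.card_piFinset,
              ← Finset.mul_prod_erase Finset.univ _ (Finset.mem_univ u),
              ← Finset.mul_prod_erase (Finset.univ.erase u) _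
                (Finset.mem_erase.2 ⟨h1, Finset.mem_univ p.1⟩),
              ← Finset.mul_prod_erase ((Finset.univ.erase u).erase p.1) _
                (Finset.mem_erase.2 ⟨Ne.symm h3, Finset.mem_erase.2 ⟨h2, Finset.mem_univ p.2⟩⟩)]
            have hv1 : (h u).card = 1 := by rw [hh]; simp
            have hv2 : (h p.1).card = 1 := by rw [hh]; simp [h1]
            have hv3 : (h p.2).card = 1 := by rw [hh]; simp [h2, Ne.symm h3]
            have hv4 : ∀ y ∈ ((Finset.univ.erase u).erase p.1).erase p.2, (h y).card = x := by
              intro y hy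
              rw [Finset.mem_erase, Finset.mem_erase, Finset.mem_erase] at hy
              rw [hh]
              simp only [if_neg hy.2.2.1, if_neg hy.2.1, if_neg hy.1]
              rw [Nat.card_Icc]
              omega
            have hcardrest : (((Finset.univ.erase u).erase p.1).erase p.2).card = n - 3 := by
              rw [Finset.card_erase_of_mem
                  (Finset.mem_erase.2 ⟨Ne.symm h3, Finset.mem_erase.2 ⟨h2, Finset.mem_univ p.2⟩⟩),
                Finset.card_erase_of_mem (Finset.mem_erase.2 ⟨h1, Finset.mem_univ p.1⟩),
                Finset.card_erase_of_mem (Finset.mem_univ u), Finset.card_univ,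
                Nat.sub_sub, Nat.sub_sub, ← hn]
            rw [hv1, hv2, hv3, Finset.prod_congr rfl hv4, Finset.prod_const, hcardrest,
              one_mul, one_mul, one_mul]
          have hcardpairs : pairs.card ≤ n * n := by
            refine le_trans (Finset.card_le_card (Finset.filter_subset _ _)) ?_
            rw [Finset.card_product, Finset.card_univ, ← hn]
          have hT2le : T2.card ≤ n * n * x ^ (n - 3) := by
            refine le_trans (Finset.card_le_card hsubT2) ?_
            refine le_trans Finset.card_biUnion_le ?_
            calc ∑ p ∈ pairs, (P.filter (fun c => c u = b ∧ c p.1 = a ∧ c p.2 = b)).card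
                ≤ ∑ _p ∈ pairs, x ^ (n - 3) := Finset.sum_le_sum hF
              _ = pairs.card * x ^ (n - 3) := by rw [Finset.sum_const, smul_eq_mul]
              _ ≤ n * n * x ^ (n - 3) := Nat.mul_le_mul_right _ hcardpairs
          have hb1 : 1 ≤ n * (k + 1) :=
            Nat.one_le_iff_ne_zero.2 (Nat.mul_ne_zero (by omega) (by omega))
          have hxle : x ≤ n * (k + 1) * m := by
            have h9 : k * n ≤ k * n * m := Nat.le_mul_of_pos_right _ (by omega)
            have h10 : n * m + k * n * m = n * (k + 1) * m := by ring
            calc x = n * m + K := hx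
              _ = n * m + k * n := by rw [hK]
              _ ≤ n * m + k * n * m := by omega
              _ = n * (k + 1) * m := h10
          have hx3 : x ^ (n - 3) ≤ (n * (k + 1)) ^ (n - 3) * m ^ (n - 3) := by
            rw [← mul_pow]
            exact Nat.pow_le_pow_left hxle _
          have hmgt : n ^ 2 * (n * (k + 1)) ^ (n - 3) < m := by
            have h11 : (n * (k + 1)) ^ (n - 3) ≤ (n * (k + 1)) ^ n :=
              Nat.pow_le_pow_right hb1 (by omega)
            have h12 : n ^ 2 * (n * (k + 1)) ^ (n - 3) ≤ n ^ 2 * (n * (k + 1)) ^ n :=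
              Nat.mul_le_mul_left _ h11
            rw [hm]
            omega
          have hfin : n * n * x ^ (n - 3) < m ^ (n - 2) := by
            have hstep : n * n * x ^ (n - 3)
                ≤ n * n * ((n * (k + 1)) ^ (n - 3) * m ^ (n - 3)) :=
              Nat.mul_le_mul_left _ hx3
            have heq1 : n * n * ((n * (k + 1)) ^ (n - 3) * m ^ (n - 3))
                = (n ^ 2 * (n * (k + 1)) ^ (n - 3)) * m ^ (n - 3) := by ring
            have hlt : (n ^ 2 * (n * (k + 1)) ^ (n - 3)) * m ^ (n - 3) < m * m ^ (n - 3) :=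
              Nat.mul_lt_mul_of_lt_of_le hmgt le_rfl (pow_pos (by omega) _)
            have heq2 : m * m ^ (n - 3) = m ^ (n - 2) := by
              have h13 : n - 2 = (n - 3) + 1 := by omega
              rw [h13, pow_succ, Nat.mul_comm]
            calc n * n * x ^ (n - 3)
                ≤ (n ^ 2 * (n * (k + 1)) ^ (n - 3)) * m ^ (n - 3) := by rw [← heq1]; exact hstep
              _ < m * m ^ (n - 3) := hlt
              _ = m ^ (n - 2) := heq2
          exact lt_of_le_of_lt hT2le hfin
      have hSaBsplit : F1.card + F2.card = SaB.card := by
        rw [hF1, hF2]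
        exact Finset.card_filter_add_card_filter_not (fun c : V → ℕ => c v = b)
      have hLle := Finset.card_le_card hLsub
      calc SbB.card = T2.card + T1.card := hTsplit.symm
        _ < F1.card + F2.card :=
          add_lt_add_of_lt_of_le (lt_of_lt_of_le hT2ub (le_trans hLlb hLle)) hT1le
        _ = SaB.card := hSaBsplit
    omega
  have hle := hmax x hxN r' hr'valid
  rw [hXstar, hX'] at hle
  have hSbcard : Sb.card ≤ X.card := Finset.card_le_card hSbX
  omega
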